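/- One step of the approximate limited-attention PageRank push operation preserves the invariant c̃r = cr(s) − cr(r). That is, if c̃r = cr(s − r), and we update c̃r' = c̃r + (1−α)·r[i]·z_i and r' = r − r[i]·z_i + α·r[i]·z_i·M (where z_i is the i-th standard basis row vector), then c̃r' = cr(s − r'). -/

import Mathlib

open Matrix BigOperators Filter
open scoped ENNReal

attribute [local instance] Matrix.linftyOpNormedRing Matrix.linftyOpNormedAlgebra

noncomputable def specRad {n : ℕ} (M : Matrix (Fin n) (Fin n) ℝ) : ENNReal :=
  spectralRadius ℂ (M.map (algebraMap ℝ ℂ))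

/-- If `α • ρ(M) < 1` then the map `x ↦ x - α • (x ᵥ* M)` has trivial kernel. -/
lemma laPR_ker_aux {n : ℕ} (M : Matrix (Fin n) (Fin n) ℝ) (α : ℝ)
    (hα0 : 0 ≤ α) (hρ : ENNReal.ofReal α * specRad M < 1)
    (x : Fin n → ℝ) (hx : x - α • Matrix.vecMul x M = 0) : x = 0 := by
  rcases eq_or_lt_of_le hα0 with h0 | h0
  · simpa [← h0] using hx
  -- set up the complex matrix
  set A : Matrix (Fin n) (Fin n) ℂ := M.map (algebraMap ℝ ℂ) with hA
  -- α⁻¹ is in the resolvent set of A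
  have hk : ((α⁻¹ : ℝ) : ℂ) ∈ resolventSet ℂ A := by
    apply spectrum.mem_resolventSet_of_spectralRadius_lt
    have hnn : ((‖((α⁻¹ : ℝ) : ℂ)‖₊ : ℝ≥0∞)) = (ENNReal.ofReal α)⁻¹ := by
      rw [Complex.nnnorm_real, ← enorm_eq_nnnorm, Real.enorm_eq_ofReal (by positivity),
        ← ENNReal.ofReal_inv_of_pos h0]
    rw [hnn]
    have ha0 : (ENNReal.ofReal α) ≠ 0 := by
      simp [ENNReal.ofReal_eq_zero, not_le, h0]
    have ha1 : (ENNReal.ofReal α) ≠ ⊤ := ENNReal.ofReal_ne_top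
    rw [← ENNReal.mul_lt_mul_iff_right ha0 ha1, ENNReal.mul_inv_cancel ha0 ha1]
    exact hρ
  -- hence 1 - α • A is a unit
  have hunit : IsUnit ((1 : Matrix (Fin n) (Fin n) ℂ) - (α : ℂ) • A) := by
    have h1 : IsUnit (algebraMap ℂ (Matrix (Fin n) (Fin n) ℂ) ((α⁻¹ : ℝ) : ℂ) - A) := hk
    have h2 : IsUnit (algebraMap ℂ (Matrix (Fin n) (Fin n) ℂ) ((α : ℝ) : ℂ)) := by
      apply IsUnit.map
      exact isUnit_iff_ne_zero.mpr (by exact_mod_cast h0.ne')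
    have := h2.mul h1
    convert this using 1
    rw [Algebra.algebraMap_eq_smul_one, Algebra.algebraMap_eq_smul_one, mul_sub,
      smul_mul_assoc, one_mul, smul_smul, smul_mul_assoc, one_mul]
    rw [← Complex.ofReal_mul, mul_inv_cancel₀ h0.ne', Complex.ofReal_one, one_smul]
  -- so its determinant is nonzero, hence det (1 - α • M) ≠ 0 over ℝ
  have hdetC : ((1 : Matrix (Fin n) (Fin n) ℂ) - (α : ℂ) • A).det ≠ 0 := by
    intro h
    rw [Matrix.isUnit_iff_isUnit_det, h] at hunit
    exact (isUnit_iff_ne_zero.mp hunit) rfl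
  have hmap : ((algebraMap ℝ ℂ) : ℝ →+* ℂ).mapMatrix
      ((1 : Matrix (Fin n) (Fin n) ℝ) - α • M) =
      (1 : Matrix (Fin n) (Fin n) ℂ) - (α : ℂ) • A := by
    ext i j
    simp [Matrix.one_apply, hA, Matrix.map_apply, apply_ite, Algebra.algebraMap_eq_smul_one]
  have hdetR : ((1 : Matrix (Fin n) (Fin n) ℝ) - α • M).det ≠ 0 := by
    intro h
    apply hdetC
    rw [← hmap, ← RingHom.map_det, h, map_zero]
  -- conclude by injectivity of vecMul with nonzero determinant
  by_contra hxne
  apply hdetR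
  rw [← Matrix.exists_vecMul_eq_zero_iff]
  refine ⟨x, hxne, ?_⟩
  have hsm : x ᵥ* (α • M) = α • (x ᵥ* M) := by
    ext j
    simp only [Matrix.vecMul, dotProduct, Matrix.smul_apply, Pi.smul_apply,
      smul_eq_mul, Finset.mul_sum]
    exact Finset.sum_congr rfl fun k _ => by ring
  rw [Matrix.vecMul_sub, Matrix.vecMul_one, hsm]
  exact hx

/-- The laPR push step preserves the invariant c̃r = cr(s - r). -/
theorem laPR_push_invariant {n : ℕ} (M : Matrix (Fin n) (Fin n) ℝ) (α : ℝ)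
    (hα0 : 0 ≤ α) (hα1 : α < 1) (hρ : ENNReal.ofReal α * specRad M < 1)
    (cr : (Fin n → ℝ) → (Fin n → ℝ))
    (hcr : ∀ x, cr x = (1 - α) • x + α • Matrix.vecMul (cr x) M)
    (s r crt : Fin n → ℝ) (i : Fin n)
    (hinv : crt = cr (s - r)) :
    crt + (1 - α) • (r i • (Pi.single i 1 : Fin n → ℝ)) =
      cr (s - (r - r i • (Pi.single i 1 : Fin n → ℝ) +
        α • (r i • Matrix.vecMul ((Pi.single i 1 : Fin n → ℝ)) M))) := by
  -- the linear map f x = x - α • (x ᵥ* M)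
  set f : (Fin n → ℝ) →ₗ[ℝ] (Fin n → ℝ) :=
    LinearMap.id - α • (Matrix.vecMulLinear M) with hf
  have hfapp : ∀ x, f x = x - α • Matrix.vecMul x M := by
    intro x
    simp [hf, Matrix.vecMulLinear]
  have hinj : Function.Injective f := by
    rw [← LinearMap.ker_eq_bot, LinearMap.ker_eq_bot']
    intro x hx
    exact laPR_ker_aux M α hα0 hρ x (by rwa [hfapp] at hx)
  have hfcr : ∀ x, f (cr x) = (1 - α) • x := by
    intro x
    rw [hfapp]
    nth_rewrite 1 [hcr x]
    abel
  apply hinj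
  rw [hfcr, map_add, hinv, hfcr, f.map_smul, f.map_smul, hfapp]
  set e : Fin n → ℝ := (Pi.single i 1 : Fin n → ℝ) with he
  set w : Fin n → ℝ := Matrix.vecMul e M with hw
  have hsub : s - (r - r i • e + α • (r i • w)) =
      (s - r) + (r i • e - α • (r i • w)) := by
    abel
  rw [hsub, smul_add]
  module
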